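/- arXiv:1701.05855 — 2 statements merged into one kernel-verified Lean document; each statement's English description precedes it below -/
import Mathlib

section
/- Let c > 0 be a constant and let G be a multi-hypergraph on vertex set V with m edges such that every vertex has degree less than cm. If A and B are disjoint subsets of V with d(A) ≥ 2cm and d(A) + 2·d(B) ≥ 3cm, then there is a partition of A ∪ B into two parts, each of which meets at least cm edges. -/
/-- The number of edges of the multi-hypergraph `G` (a multiset of finite edges,
counted with multiplicity) that meet the vertex set `A`. -/
def edgesMeeting {V : Type*} [DecidableEq V] (G : Multiset (Finset V)) (A : Finset V) : ℕ :=
  Multiset.card (G.filter fun e => (A ∩ e).Nonempty)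

section Statement2Aux

private lemma count_le {α : Type*} (s : Multiset α) (p q r : α → Prop)
    [DecidablePred p] [DecidablePred q] [DecidablePred r]
    (h : ∀ e, p e → q e ∨ r e) :
    Multiset.card (s.filter p) ≤ Multiset.card (s.filter q) + Multiset.card (s.filter r) := by
  induction s using Multiset.induction_on with
  | empty => simp
  | cons a s ih =>
    by_cases hp : p a
    · rcases h a hp with h1 | h1
      · by_cases h2 : r a <;> simp [Multiset.filter_cons, hp, h1, h2] <;> omega
      · by_cases h2 : q a <;> simp [Multiset.filter_cons, hp, h1, h2] <;> omega
    · by_cases h1 : q a <;> by_cases h2 : r a <;>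
        simp [Multiset.filter_cons, hp, h1, h2] <;> omega

private lemma count_mono {α : Type*} (s : Multiset α) (p q : α → Prop)
    [DecidablePred p] [DecidablePred q] (h : ∀ e, p e → q e) :
    Multiset.card (s.filter p) ≤ Multiset.card (s.filter q) := by
  induction s using Multiset.induction_on with
  | empty => simp
  | cons a s ih =>
    by_cases hp : p a
    · have hq := h a hp
      simp [Multiset.filter_cons, hp, hq]; omega
    · by_cases hq : q a <;> simp [Multiset.filter_cons, hp, hq] <;> omega

private lemma count_split {α : Type*} (s : Multiset α) (r p : α → Prop)
    [DecidablePred r] [DecidablePred p] :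
    Multiset.card (s.filter r) =
      Multiset.card (s.filter fun e => r e ∧ p e) +
        Multiset.card (s.filter fun e => r e ∧ ¬ p e) := by
  induction s using Multiset.induction_on with
  | empty => simp
  | cons a s ih =>
    by_cases hr : r a <;> by_cases hp : p a <;>
      simp [Multiset.filter_cons, hr, hp] <;> omega

private lemma inter_union_nonempty {α : Type*} [DecidableEq α] (S T e : Finset α) :
    ((S ∪ T) ∩ e).Nonempty ↔ (S ∩ e).Nonempty ∨ (T ∩ e).Nonempty := by
  constructor
  · rintro ⟨w, hw⟩
    rw [Finset.mem_inter, Finset.mem_union] at hw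
    rcases hw.1 with h | h
    · exact Or.inl ⟨w, Finset.mem_inter.mpr ⟨h, hw.2⟩⟩
    · exact Or.inr ⟨w, Finset.mem_inter.mpr ⟨h, hw.2⟩⟩
  · rintro (⟨w, hw⟩ | ⟨w, hw⟩) <;> rw [Finset.mem_inter] at hw
    · exact ⟨w, Finset.mem_inter.mpr ⟨Finset.mem_union_left _ hw.1, hw.2⟩⟩
    · exact ⟨w, Finset.mem_inter.mpr ⟨Finset.mem_union_right _ hw.1, hw.2⟩⟩

private lemma inter_nonempty_subset {α : Type*} [DecidableEq α] {S T U : Finset α}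
    (h : S ⊆ T ∪ U) (e : Finset α) :
    (S ∩ e).Nonempty → (T ∩ e).Nonempty ∨ (U ∩ e).Nonempty := by
  rintro ⟨w, hw⟩
  rw [Finset.mem_inter] at hw
  have hTU : w ∈ T ∪ U := h hw.1
  rw [Finset.mem_union] at hTU
  rcases hTU with h1 | h1
  · exact Or.inl ⟨w, Finset.mem_inter.mpr ⟨h1, hw.2⟩⟩
  · exact Or.inr ⟨w, Finset.mem_inter.mpr ⟨h1, hw.2⟩⟩

/-- Edges meeting `S` but not meeting `B`. -/
private def fcnt {V : Type*} [DecidableEq V] (G : Multiset (Finset V)) (B S : Finset V) : ℕ :=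
  Multiset.card (G.filter fun e => (S ∩ e).Nonempty ∧ ¬ (B ∩ e).Nonempty)

variable {V : Type*} [DecidableEq V]

private lemma meet_union (G : Multiset (Finset V)) (B S : Finset V) :
    edgesMeeting G (S ∪ B) = edgesMeeting G B + fcnt G B S := by
  unfold edgesMeeting fcnt
  rw [count_split G (fun e => ((S ∪ B) ∩ e).Nonempty) (fun e => (B ∩ e).Nonempty)]
  congr 1
  · apply congrArg
    apply Multiset.filter_congr
    intro e _
    constructor
    · exact And.right
    · intro hB
      exact ⟨(inter_union_nonempty S B e).mpr (Or.inr hB), hB⟩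
  · apply congrArg
    apply Multiset.filter_congr
    intro e _
    constructor
    · rintro ⟨h1, h2⟩
      rcases (inter_union_nonempty S B e).mp h1 with h | h
      · exact ⟨h, h2⟩
      · exact absurd h h2
    · rintro ⟨h1, h2⟩
      exact ⟨(inter_union_nonempty S B e).mpr (Or.inl h1), h2⟩

private lemma meet_split (G : Multiset (Finset V)) (B A : Finset V) :
    edgesMeeting G A =
      Multiset.card (G.filter fun e => (A ∩ e).Nonempty ∧ (B ∩ e).Nonempty) + fcnt G B A := by
  unfold edgesMeeting fcnt
  exact count_split G _ _

private lemma meet_subadd (G : Multiset (Finset V)) {S T U : Finset V} (h : S ⊆ T ∪ U) :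
    edgesMeeting G S ≤ edgesMeeting G T + edgesMeeting G U := by
  unfold edgesMeeting
  exact count_le G _ _ _ (inter_nonempty_subset h)

private lemma fcnt_subadd (G : Multiset (Finset V)) (B : Finset V) {S T U : Finset V}
    (h : S ⊆ T ∪ U) :
    fcnt G B S ≤ fcnt G B T + fcnt G B U := by
  unfold fcnt
  apply count_le
  intro e he
  rcases inter_nonempty_subset h e he.1 with h1 | h1
  · exact Or.inl ⟨h1, he.2⟩
  · exact Or.inr ⟨h1, he.2⟩

private lemma fcnt_empty (G : Multiset (Finset V)) (B : Finset V) : fcnt G B ∅ = 0 := by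
  unfold fcnt
  simp [Multiset.filter_eq_nil]

end Statement2Aux

/-- If every vertex has degree less than `c * m` and `A`, `B` are disjoint sets with
`d(A) ≥ 2cm` and `d(A) + 2 d(B) ≥ 3cm`, then `A ∪ B` can be partitioned into two parts,
each meeting at least `c * m` edges. -/
theorem statement2 {V : Type*} [DecidableEq V] (c : ℝ) (hc : 0 < c)
    (G : Multiset (Finset V)) (hGne : ∀ e ∈ G, e.Nonempty)
    (m : ℕ) (hm : Multiset.card G = m)
    (hdeg : ∀ v : V, (edgesMeeting G {v} : ℝ) < c * m)
    (A B : Finset V) (hAB : Disjoint A B)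
    (hA : 2 * c * m ≤ (edgesMeeting G A : ℝ))
    (hAB2 : 3 * c * m ≤ (edgesMeeting G A : ℝ) + 2 * (edgesMeeting G B : ℝ)) :
    ∃ P₁ P₂ : Finset V,
      P₁ ∪ P₂ = A ∪ B ∧ Disjoint P₁ P₂ ∧
      c * m ≤ (edgesMeeting G P₁ : ℝ) ∧
      c * m ≤ (edgesMeeting G P₂ : ℝ) := by
  classical
  have hcm0 : (0 : ℝ) ≤ c * m := by positivity
  -- Case 1 : d(B) ≥ cm
  by_cases hxcm : c * m ≤ (edgesMeeting G B : ℝ)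
  · exact ⟨A, B, rfl, hAB, by linarith, hxcm⟩
  push_neg at hxcm
  -- Case 2 : some singleton together with B meets ≥ cm edges
  by_cases hsing : ∃ a ∈ A, c * m ≤ (edgesMeeting G B : ℝ) + (fcnt G B {a} : ℝ)
  · obtain ⟨a, haA, hfa⟩ := hsing
    have haU : A ⊆ (A \ {a}) ∪ {a} := by
      rw [Finset.sdiff_union_of_subset (Finset.singleton_subset_iff.mpr haA)]
    have hsub : edgesMeeting G A ≤ edgesMeeting G (A \ {a}) + edgesMeeting G {a} :=
      meet_subadd G haU
    refine ⟨{a} ∪ B, A \ {a}, ?_, ?_, ?_, ?_⟩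
    · ext w
      simp only [Finset.mem_union, Finset.mem_sdiff, Finset.mem_singleton]
      have hw : w = a → w ∈ A := fun h => h ▸ haA
      tauto
    · refine Finset.disjoint_union_left.mpr ⟨?_, ?_⟩
      · simp
      · exact Finset.disjoint_of_subset_right Finset.sdiff_subset hAB.symm
    · rw [meet_union G B {a}]
      push_cast
      push_cast at hfa
      linarith
    · have h1 : (edgesMeeting G A : ℝ) ≤ edgesMeeting G (A \ {a}) + edgesMeeting G {a} := by
        exact_mod_cast hsub
      have h2 := hdeg a
      linarith
  push_neg at hsing
  -- Case 3
  -- z : number of edges meeting both A and B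
  set z : ℕ := Multiset.card (G.filter fun e => (A ∩ e).Nonempty ∧ (B ∩ e).Nonempty) with hzdef
  have hsplitA : edgesMeeting G A = z + fcnt G B A := meet_split G B A
  have hzx : z ≤ edgesMeeting G B := by
    rw [hzdef]
    unfold edgesMeeting
    exact count_mono G _ _ (fun e h => h.2)
  have hfAx : c * m ≤ (edgesMeeting G B : ℝ) + (fcnt G B A : ℝ) := by
    have e1 : (edgesMeeting G A : ℝ) = (z : ℝ) + (fcnt G B A : ℝ) := by exact_mod_cast hsplitA
    have e2 : (z : ℝ) ≤ (edgesMeeting G B : ℝ) := by exact_mod_cast hzx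
    linarith
  -- choose S ⊆ A of minimum cardinality with cm ≤ x + f S
  obtain ⟨S, hSmem, hSmin⟩ :=
    Finset.exists_min_image
      (A.powerset.filter fun S => c * m ≤ (edgesMeeting G B : ℝ) + (fcnt G B S : ℝ))
      Finset.card
      ⟨A, Finset.mem_filter.mpr ⟨Finset.mem_powerset.mpr (Finset.Subset.refl A), hfAx⟩⟩
  rw [Finset.mem_filter, Finset.mem_powerset] at hSmem
  obtain ⟨hSsub, hSf⟩ := hSmem
  have hSne : S.Nonempty := by
    rcases Finset.eq_empty_or_nonempty S with h | h
    · exfalso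
      rw [h, fcnt_empty] at hSf
      push_cast at hSf
      linarith
    · exact h
  obtain ⟨v, hv⟩ := hSne
  have hvS' : (edgesMeeting G B : ℝ) + (fcnt G B (S \ {v}) : ℝ) < c * m := by
    by_contra hcon
    push_neg at hcon
    have hmem : S \ {v} ∈ A.powerset.filter
        fun S => c * m ≤ (edgesMeeting G B : ℝ) + (fcnt G B S : ℝ) :=
      Finset.mem_filter.mpr
        ⟨Finset.mem_powerset.mpr (Finset.Subset.trans Finset.sdiff_subset hSsub), hcon⟩
    have hcard := hSmin _ hmem
    have hlt : (S \ {v}).card < S.card :=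
      Finset.card_lt_card
        (Finset.sdiff_ssubset (Finset.singleton_subset_iff.mpr hv) (Finset.singleton_nonempty v))
    omega
  have hfv := hsing v (hSsub hv)
  have hfsplit : fcnt G B S ≤ fcnt G B (S \ {v}) + fcnt G B {v} := by
    apply fcnt_subadd
    rw [Finset.sdiff_union_of_subset (Finset.singleton_subset_iff.mpr hv)]
  have hfAsub : fcnt G B A ≤ fcnt G B S + fcnt G B (A \ S) := by
    apply fcnt_subadd
    rw [Finset.union_sdiff_of_subset hSsub]
  -- key : cm < x + f(A \ S)
  have hkey : c * m < (edgesMeeting G B : ℝ) + (fcnt G B (A \ S) : ℝ) := by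
    have e1 : (edgesMeeting G A : ℝ) = (z : ℝ) + (fcnt G B A : ℝ) := by exact_mod_cast hsplitA
    have e2 : (z : ℝ) ≤ (edgesMeeting G B : ℝ) := by exact_mod_cast hzx
    have e3 : (fcnt G B A : ℝ) ≤ (fcnt G B S : ℝ) + (fcnt G B (A \ S) : ℝ) := by
      exact_mod_cast hfAsub
    have e4 : (fcnt G B S : ℝ) ≤ (fcnt G B (S \ {v}) : ℝ) + (fcnt G B {v} : ℝ) := by
      exact_mod_cast hfsplit
    linarith
  by_cases h3a : c * m ≤ (edgesMeeting G (A \ S) : ℝ)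
  · -- partition (S ∪ B, A \ S)
    refine ⟨S ∪ B, A \ S, ?_, ?_, ?_, h3a⟩
    · ext w
      simp only [Finset.mem_union, Finset.mem_sdiff]
      have hw := @hSsub w
      tauto
    · refine Finset.disjoint_union_left.mpr ⟨?_, ?_⟩
      · exact Finset.disjoint_sdiff
      · exact Finset.disjoint_of_subset_right Finset.sdiff_subset hAB.symm
    · rw [meet_union G B S]
      push_cast
      linarith
  · push_neg at h3a
    have hdS : c * m ≤ (edgesMeeting G S : ℝ) := by
      by_contra hcon
      push_neg at hcon
      have hsub2 : edgesMeeting G A ≤ edgesMeeting G S + edgesMeeting G (A \ S) := by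
        apply meet_subadd
        rw [Finset.union_sdiff_of_subset hSsub]
      have h1 : (edgesMeeting G A : ℝ) ≤ edgesMeeting G S + edgesMeeting G (A \ S) := by
        exact_mod_cast hsub2
      linarith
    -- partition (S, (A \ S) ∪ B)
    refine ⟨S, (A \ S) ∪ B, ?_, ?_, hdS, ?_⟩
    · ext w
      simp only [Finset.mem_union, Finset.mem_sdiff]
      have hw := @hSsub w
      tauto
    · refine Finset.disjoint_union_right.mpr ⟨?_, ?_⟩
      · exact Finset.disjoint_sdiff
      · exact Finset.disjoint_of_subset_left hSsub hAB
    · rw [meet_union G B (A \ S)]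
      push_cast
      linarith
end

section
/- Let G be an r-uniform multi-hypergraph on vertex set V with m edges, and let V₁, V₂, …, V_r be a partition of V for which Σᵢ d(Vᵢ) is as large as possible, ordered such that d(V₁) ≥ d(V₂) ≥ ⋯ ≥ d(V_r). Let c > 0 be a constant with d(V_{r−1}) ≥ cm. Then either there exists a partition W₁, W₂, …, W_r of V with Wᵢ ⊆ Vᵢ for 1 ≤ i ≤ r−1 (and so W_r ⊇ V_r) such that each part meets at least cm edges, or there exists a partition W₁, W₂, …, W_r of V, again with Wᵢ ⊆ Vᵢ for 1 ≤ i ≤ r−1, such that for each i ≠ r one has d(Wᵢ) ≥ cm but d(Wᵢ \ {w}) < cm for every w ∈ Wᵢ, and moreover Σ_{i=1}^{r−1} d(Wᵢ) > (r+1)(m − cm). -/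
section helpers
variable {V : Type*} [DecidableEq V] {α : Type*} {ι : Type*}

lemma card_filter_eq_sum (s : Multiset α) (p : α → Prop) [DecidablePred p] :
    Multiset.card (s.filter p) = (s.map fun a => if p a then 1 else 0).sum := by
  induction s using Multiset.induction with
  | empty => simp
  | cons a s ih => by_cases h : p a <;> simp [Multiset.filter_cons, h, ih] <;> omega

lemma sum_map_le (s : Multiset α) (f g : α → ℕ) (h : ∀ a ∈ s, f a ≤ g a) :
    (s.map f).sum ≤ (s.map g).sum := by
  induction s using Multiset.induction with
  | empty => simp
  | cons a s ih =>
    simp only [Multiset.map_cons, Multiset.sum_cons]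
    exact Nat.add_le_add (h a (by simp)) (ih fun x hx => h x (by simp [hx]))

lemma sum_swap_lemma (s : Multiset α) (I : Finset ι) (g : ι → α → ℕ) :
    ∑ i ∈ I, (s.map (g i)).sum = (s.map fun a => ∑ i ∈ I, g i a).sum := by
  induction s using Multiset.induction with
  | empty => simp
  | cons a s ih => simp [Multiset.map_cons, Multiset.sum_cons, Finset.sum_add_distrib, ih]

lemma double_count (s : Multiset α) (I : Finset ι) (q : ι → α → Prop)
    [∀ i, DecidablePred (q i)] [DecidableEq ι] :
    ∑ i ∈ I, Multiset.card (s.filter (q i)) =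
      (s.map fun a => (I.filter fun i => q i a).card).sum := by
  calc ∑ i ∈ I, Multiset.card (s.filter (q i))
      = ∑ i ∈ I, (s.map fun a => if q i a then 1 else 0).sum :=
        Finset.sum_congr rfl fun i _ => card_filter_eq_sum s (q i)
    _ = (s.map fun a => ∑ i ∈ I, if q i a then 1 else 0).sum := sum_swap_lemma s I _
    _ = (s.map fun a => (I.filter fun i => q i a).card).sum := by
        congr 1; apply Multiset.map_congr rfl; intro a _
        rw [Finset.card_filter]

lemma card_filter_split (s : Multiset α) (p q : α → Prop) [DecidablePred p] [DecidablePred q] :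
    Multiset.card (s.filter p) =
      Multiset.card (s.filter fun a => p a ∧ q a) +
      Multiset.card (s.filter fun a => p a ∧ ¬ q a) := by
  induction s using Multiset.induction with
  | empty => simp
  | cons a s ih =>
    by_cases hp : p a <;> by_cases hq : q a <;>
      simp [Multiset.filter_cons, hp, hq, ih] <;> omega

lemma em_split (G : Multiset (Finset V)) (A : Finset V) (q : Finset V → Prop) [DecidablePred q] :
    edgesMeeting G A = Multiset.card (G.filter fun e => (A ∩ e).Nonempty ∧ q e)
      + Multiset.card (G.filter fun e => (A ∩ e).Nonempty ∧ ¬ q e) :=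
  card_filter_split G _ q

lemma em_mono (G : Multiset (Finset V)) {A B : Finset V} (h : A ⊆ B) :
    edgesMeeting G A ≤ edgesMeeting G B := by
  apply Multiset.card_le_card
  apply Multiset.monotone_filter_right
  intro e he
  exact he.mono (Finset.inter_subset_inter h (subset_refl e))

lemma em_sdiff (G : Multiset (Finset V)) {A : Finset V} {w : V} (hw : w ∈ A) :
    edgesMeeting G A = edgesMeeting G (A \ {w}) +
      Multiset.card (G.filter fun e => w ∈ e ∧ ((A \ {w}) ∩ e) = ∅) := by
  rw [em_split G A (fun e => ((A \ {w}) ∩ e).Nonempty)]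
  congr 1
  · apply congrArg
    apply Multiset.filter_congr
    intro e _
    constructor
    · exact fun h => h.2
    · intro h
      exact ⟨h.mono (Finset.inter_subset_inter (Finset.sdiff_subset) (subset_refl e)), h⟩
  · apply congrArg
    apply Multiset.filter_congr
    intro e _
    rw [Finset.not_nonempty_iff_eq_empty]
    constructor
    · rintro ⟨⟨x, hx⟩, h2⟩
      obtain ⟨hxA, hxe⟩ := Finset.mem_inter.mp hx
      have hxw : x = w := by
        by_contra hne
        have : x ∈ (A \ {w}) ∩ e := Finset.mem_inter.mpr
          ⟨Finset.mem_sdiff.mpr ⟨hxA, by simp [hne]⟩, hxe⟩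
        rw [h2] at this
        exact absurd this (Finset.notMem_empty x)
      exact ⟨hxw ▸ hxe, h2⟩
    · rintro ⟨hwe, h2⟩
      exact ⟨⟨w, Finset.mem_inter.mpr ⟨hw, hwe⟩⟩, h2⟩

lemma em_insert (G : Multiset (Finset V)) (A : Finset V) (w : V) :
    edgesMeeting G (insert w A) = edgesMeeting G A +
      Multiset.card (G.filter fun e => w ∈ e ∧ (A ∩ e) = ∅) := by
  rw [em_split G (insert w A) (fun e => (A ∩ e).Nonempty)]
  congr 1
  · apply congrArg
    apply Multiset.filter_congr
    intro e _
    constructor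
    · exact fun h => h.2
    · intro h
      exact ⟨h.mono (Finset.inter_subset_inter (Finset.subset_insert w A) (subset_refl e)), h⟩
  · apply congrArg
    apply Multiset.filter_congr
    intro e _
    rw [Finset.not_nonempty_iff_eq_empty]
    constructor
    · rintro ⟨⟨x, hx⟩, h2⟩
      obtain ⟨hxA, hxe⟩ := Finset.mem_inter.mp hx
      rcases Finset.mem_insert.mp hxA with h | h
      · exact ⟨h ▸ hxe, h2⟩
      · exfalso
        have : x ∈ A ∩ e := Finset.mem_inter.mpr ⟨h, hxe⟩
        rw [h2] at this
        exact absurd this (Finset.notMem_empty x)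
    · rintro ⟨hwe, h2⟩
      exact ⟨⟨w, Finset.mem_inter.mpr ⟨Finset.mem_insert_self w A, hwe⟩⟩, h2⟩

end helpers

/-- Let `V₁, …, V_r` (here `P 0, …, P (r-1)`) be a partition of the vertex set of an
`r`-uniform multi-hypergraph maximising `∑ i, d(Vᵢ)`, ordered with `d(V₁) ≥ ⋯ ≥ d(V_r)`,
and suppose `d(V_{r-1}) ≥ c m`.  Then either there is a partition `W₁, …, W_r` with
`Wᵢ ⊆ Vᵢ` for `i ≤ r-1` (and so `W_r ⊇ V_r`) in which every part meets at least `c m`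
edges, or there is such a partition in which, for each `i ≠ r`, `Wᵢ` is a minimal set
meeting at least `c m` edges, and `∑_{i<r} d(Wᵢ) > (r+1)(m - c m)`. -/
theorem statement6 {V : Type*} [Fintype V] [DecidableEq V] (r : ℕ) (hr : 2 ≤ r)
    (G : Multiset (Finset V)) (hunif : ∀ e ∈ G, e.card = r)
    (m : ℕ) (hm : Multiset.card G = m)
    (c : ℝ) (hc : 0 < c)
    (P : Fin r → Finset V) (hpart : ∀ v : V, ∃! i, v ∈ P i)
    (hmax : ∀ Q : Fin r → Finset V, (∀ v : V, ∃! i, v ∈ Q i) →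
      ∑ i : Fin r, edgesMeeting G (Q i) ≤ ∑ i : Fin r, edgesMeeting G (P i))
    (horder : ∀ i j : Fin r, i ≤ j → edgesMeeting G (P j) ≤ edgesMeeting G (P i))
    (hVr1 : c * m ≤ (edgesMeeting G (P ⟨r - 2, by omega⟩) : ℝ)) :
    (∃ W : Fin r → Finset V, (∀ v : V, ∃! i, v ∈ W i) ∧
      (∀ i : Fin r, (i : ℕ) < r - 1 → W i ⊆ P i) ∧
      P ⟨r - 1, by omega⟩ ⊆ W ⟨r - 1, by omega⟩ ∧
      ∀ i : Fin r, c * m ≤ (edgesMeeting G (W i) : ℝ)) ∨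
    (∃ W : Fin r → Finset V, (∀ v : V, ∃! i, v ∈ W i) ∧
      (∀ i : Fin r, (i : ℕ) < r - 1 → W i ⊆ P i) ∧
      (∀ i : Fin r, (i : ℕ) < r - 1 →
        c * m ≤ (edgesMeeting G (W i) : ℝ) ∧
        ∀ w ∈ W i, (edgesMeeting G (W i \ {w}) : ℝ) < c * m) ∧
      ((r : ℝ) + 1) * (m - c * m) <
        ∑ i ∈ Finset.univ.filter (fun i : Fin r => (i : ℕ) < r - 1),
          (edgesMeeting G (W i) : ℝ)) := by
  classical
  have hrm1 : r - 1 < r := by omega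
  set last : Fin r := ⟨r - 1, hrm1⟩ with hlastdef
  -- `c m ≤ d (P i)` for each `i` with `i < r - 1`
  have hPge : ∀ i : Fin r, (i : ℕ) < r - 1 → c * m ≤ (edgesMeeting G (P i) : ℝ) := by
    intro i hi
    refine le_trans hVr1 ?_
    exact_mod_cast horder i ⟨r - 2, by omega⟩ (by simp only [Fin.le_def]; omega)
  -- minimal subsets
  have hexists : ∀ i : Fin r, (i : ℕ) < r - 1 → ∃ S : Finset V, S ⊆ P i ∧
      c * m ≤ (edgesMeeting G S : ℝ) ∧
      ∀ w ∈ S, (edgesMeeting G (S \ {w}) : ℝ) < c * m := by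
    intro i hi
    obtain ⟨S, hS, hmin⟩ := Finset.exists_min_image
      ((P i).powerset.filter fun S => c * m ≤ (edgesMeeting G S : ℝ)) Finset.card
      ⟨P i, by simp [hPge i hi]⟩
    rw [Finset.mem_filter, Finset.mem_powerset] at hS
    refine ⟨S, hS.1, hS.2, ?_⟩
    intro w hw
    by_contra hge
    push_neg at hge
    have hmem : S \ {w} ∈ (P i).powerset.filter fun S => c * m ≤ (edgesMeeting G S : ℝ) := by
      rw [Finset.mem_filter, Finset.mem_powerset]
      exact ⟨(Finset.sdiff_subset).trans hS.1, hge⟩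
    have hcard := hmin _ hmem
    have : (S \ {w}).card < S.card := by
      rw [← Finset.erase_eq]
      exact Finset.card_erase_lt_of_mem hw
    omega
  choose W0 hW0sub hW0ge hW0min using hexists
  set W1 : Fin r → Finset V := fun i => if h : (i : ℕ) < r - 1 then W0 i h else ∅ with hW1def
  set Rest : Finset V := Finset.univ.filter (fun v => ∀ j, v ∉ W1 j) with hRestdef
  set W : Fin r → Finset V := fun i => if (i : ℕ) < r - 1 then W1 i else Rest with hWdef
  have hW1sub : ∀ i, W1 i ⊆ P i := by
    intro i
    rw [hW1def]
    by_cases h : (i : ℕ) < r - 1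
    · simpa [h] using hW0sub i h
    · simp [h]
  have hW1uniq : ∀ v (i j : Fin r), v ∈ W1 i → v ∈ W1 j → i = j := by
    intro v i j hi hj
    obtain ⟨k, _, hu⟩ := hpart v
    rw [hu i (hW1sub i hi), hu j (hW1sub j hj)]
  have hWlt : ∀ (i : Fin r) (h : (i : ℕ) < r - 1), W i = W0 i h := by
    intro i h
    rw [hWdef, hW1def]
    simp [h]
  have hWlast : W last = Rest := by
    rw [hWdef]
    simp [hlastdef]
  have hicases : ∀ i : Fin r, (i : ℕ) < r - 1 ∨ i = last := by
    intro i
    by_cases h : (i : ℕ) < r - 1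
    · exact Or.inl h
    · right
      apply Fin.ext
      simp only [hlastdef]
      omega
  have hWpart : ∀ v : V, ∃! i, v ∈ W i := by
    intro v
    by_cases hv : ∃ j, v ∈ W1 j
    · obtain ⟨j, hj⟩ := hv
      have hjlt : (j : ℕ) < r - 1 := by
        by_contra h
        rw [hW1def] at hj
        simp [h] at hj
      refine ⟨j, ?_, ?_⟩
      · show v ∈ W j
        rw [hWdef]; simpa [hjlt] using hj
      · intro y hy
        rcases hicases y with h | h
        · rw [hWdef] at hy
          simp only [h, if_pos] at hy
          exact hW1uniq v y j hy hj
        · exfalso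
          rw [h, hWlast, hRestdef] at hy
          simp only [Finset.mem_filter] at hy
          exact hy.2 j hj
    · push_neg at hv
      refine ⟨last, ?_, ?_⟩
      · show v ∈ W last
        rw [hWlast, hRestdef]
        simp only [Finset.mem_filter, Finset.mem_univ, true_and]
        exact hv
      · intro y hy
        rcases hicases y with h | h
        · exfalso
          rw [hWdef] at hy
          simp only [h, if_pos] at hy
          exact hv y hy
        · exact h
  have hWsub : ∀ i : Fin r, (i : ℕ) < r - 1 → W i ⊆ P i := by
    intro i hi
    rw [hWlt i hi]
    exact hW0sub i hi
  have hPlastW : P last ⊆ W last := by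
    intro v hv
    rw [hWlast, hRestdef]
    simp only [Finset.mem_filter, Finset.mem_univ, true_and]
    intro j hj
    have hjlt : (j : ℕ) < r - 1 := by
      by_contra h
      rw [hW1def] at hj
      simp [h] at hj
    have : j = last := by
      obtain ⟨k, _, hu⟩ := hpart v
      rw [hu j (hW1sub j hj), hu last hv]
    rw [this] at hjlt
    simp [hlastdef] at hjlt
  by_cases hcase : c * m ≤ (edgesMeeting G (W last) : ℝ)
  · left
    refine ⟨W, hWpart, hWsub, hPlastW, ?_⟩
    intro i
    rcases hicases i with h | h
    · rw [hWlt i h]; exact hW0ge i h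
    · rw [h]; exact hcase
  · right
    push_neg at hcase
    refine ⟨W, hWpart, hWsub, ?_, ?_⟩
    · intro i hi
      rw [hWlt i hi]
      exact ⟨hW0ge i hi, hW0min i hi⟩
    · -- the key counting inequality
      have hlastval : (last : ℕ) = r - 1 := rfl
      set I : Finset (Fin r) := Finset.univ.filter (fun i : Fin r => (i : ℕ) < r - 1) with hIdef
      set F : Multiset (Finset V) := G.filter (fun e => W last ∩ e = ∅) with hFdef
      -- consequence of maximality of P: moving w from P i to P last does not help
      have key : ∀ (i : Fin r), i ≠ last → ∀ w ∈ P i,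
          Multiset.card (G.filter fun e => w ∈ e ∧ (P last ∩ e) = ∅) ≤
          Multiset.card (G.filter fun e => w ∈ e ∧ ((P i \ {w}) ∩ e) = ∅) := by
        intro i hine w hw
        set Q : Fin r → Finset V := fun j =>
          if j = i then P i \ {w} else if j = last then insert w (P last) else P j with hQdef
        have hQi : Q i = P i \ {w} := by rw [hQdef]; simp
        have hQl : Q last = insert w (P last) := by rw [hQdef]; simp [Ne.symm hine]
        have hQo : ∀ j, j ≠ i → j ≠ last → Q j = P j := by
          intro j h1 h2; rw [hQdef]; simp [h1, h2]
        have hQpart : ∀ v : V, ∃! j, v ∈ Q j := by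
          intro v
          obtain ⟨j₀, hj₀, hu⟩ := hpart v
          by_cases hvw : v = w
          · subst hvw
            have hj0i : i = j₀ := hu i hw
            refine ⟨last, ?_, ?_⟩
            · show v ∈ Q last
              rw [hQl]; exact Finset.mem_insert_self v _
            · intro y hy
              have hy' : v ∈ Q y := hy
              by_cases hyi : y = i
              · exfalso
                rw [hyi, hQi] at hy'
                simp at hy'
              · by_cases hyl : y = last
                · exact hyl
                · exfalso
                  rw [hQo y hyi hyl] at hy'
                  exact hyi ((hu y hy').trans hj0i.symm)
          · refine ⟨j₀, ?_, ?_⟩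
            · show v ∈ Q j₀
              by_cases hji : j₀ = i
              · rw [hji, hQi]
                rw [hji] at hj₀
                exact Finset.mem_sdiff.mpr ⟨hj₀, by simp [hvw]⟩
              · by_cases hjl : j₀ = last
                · rw [hjl, hQl]
                  rw [hjl] at hj₀
                  exact Finset.mem_insert_of_mem hj₀
                · rw [hQo j₀ hji hjl]; exact hj₀
            · intro y hy
              have hy' : v ∈ Q y := hy
              by_cases hyi : y = i
              · rw [hyi, hQi] at hy'
                rw [hyi]
                exact hu i (Finset.mem_sdiff.mp hy').1
              · by_cases hyl : y = last
                · rw [hyl, hQl] at hy'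
                  rcases Finset.mem_insert.mp hy' with h | h
                  · exact absurd h hvw
                  · rw [hyl]; exact hu last h
                · rw [hQo y hyi hyl] at hy'
                  exact hu y hy'
        have h1 := hmax Q hQpart
        have hsplitsum : ∀ f : Fin r → ℕ, ∑ j, f j =
            f i + (f last + ∑ j ∈ (Finset.univ.erase i).erase last, f j) := by
          intro f
          rw [← Finset.add_sum_erase _ f (Finset.mem_univ i),
              ← Finset.add_sum_erase _ f
                (Finset.mem_erase.mpr ⟨Ne.symm hine, Finset.mem_univ last⟩)]
        rw [hsplitsum (fun j => edgesMeeting G (Q j)),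
            hsplitsum (fun j => edgesMeeting G (P j))] at h1
        have hrest : ∑ j ∈ (Finset.univ.erase i).erase last, edgesMeeting G (Q j)
            = ∑ j ∈ (Finset.univ.erase i).erase last, edgesMeeting G (P j) := by
          apply Finset.sum_congr rfl
          intro j hj
          rw [Finset.mem_erase, Finset.mem_erase] at hj
          rw [hQo j hj.2.1 hj.1]
        rw [hrest, hQi, hQl] at h1
        rw [em_sdiff G hw, em_insert G (P last) w] at h1
        omega
      -- cardinality facts
      have hIcard : I.card = r - 1 := by
        have hIe : I = Finset.univ.erase last := by
          ext j
          simp only [hIdef, Finset.mem_filter, Finset.mem_univ, true_and,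
            Finset.mem_erase, and_true]
          constructor
          · intro h hje
            rw [hje, hlastval] at h
            omega
          · intro h
            rcases hicases j with h2 | h2
            · exact h2
            · exact absurd h2 h
        rw [hIe, Finset.card_erase_of_mem (Finset.mem_univ last), Finset.card_univ,
          Fintype.card_fin]
      have hg : ∀ e ∈ F, e ∈ G ∧ W last ∩ e = ∅ := fun e he => Multiset.mem_filter.mp he
      have hcover : ∀ e ∈ F, r ≤ ∑ i ∈ I, (W i ∩ e).card := by
        intro e he
        obtain ⟨heG, hel⟩ := hg e he
        have hsubset : e ⊆ I.biUnion fun i => W i ∩ e := by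
          intro v hv
          obtain ⟨j, hjW, _⟩ := hWpart v
          have hjW' : v ∈ W j := hjW
          have hjI : j ∈ I := by
            rw [hIdef, Finset.mem_filter]
            refine ⟨Finset.mem_univ j, ?_⟩
            rcases hicases j with h | h
            · exact h
            · exfalso
              rw [h] at hjW'
              have hmem : v ∈ W last ∩ e := Finset.mem_inter.mpr ⟨hjW', hv⟩
              rw [hel] at hmem
              exact absurd hmem (Finset.notMem_empty v)
          exact Finset.mem_biUnion.mpr ⟨j, hjI, Finset.mem_inter.mpr ⟨hjW', hv⟩⟩
        calc r = e.card := (hunif e heG).symm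
          _ ≤ (I.biUnion fun i => W i ∩ e).card := Finset.card_le_card hsubset
          _ ≤ ∑ i ∈ I, (W i ∩ e).card := Finset.card_biUnion_le
      have hsplitW : ∀ i : Fin r, edgesMeeting G (W i) =
          Multiset.card (G.filter fun e => (W i ∩ e).card = 1) +
          Multiset.card (G.filter fun e => 2 ≤ (W i ∩ e).card) := by
        intro i
        rw [em_split G (W i) (fun e => (W i ∩ e).card = 1)]
        congr 1
        · apply congrArg
          apply Multiset.filter_congr
          intro e _
          constructor
          · exact fun h => h.2
          · intro h
            exact ⟨Finset.card_pos.mp (by omega), h⟩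
        · apply congrArg
          apply Multiset.filter_congr
          intro e _
          constructor
          · rintro ⟨h1, h2⟩
            have := Finset.card_pos.mpr h1
            omega
          · intro h
            exact ⟨Finset.card_pos.mp (by omega), by omega⟩
      have hFcard : Multiset.card F + edgesMeeting G (W last) = m := by
        have h := Multiset.filter_add_not (fun e => (W last ∩ e).Nonempty) G
        have h2 : Multiset.card (G.filter fun e => (W last ∩ e).Nonempty) +
            Multiset.card (G.filter fun e => ¬ (W last ∩ e).Nonempty) = m := by
          rw [← Multiset.card_add, h, hm]
        have h3 : F = G.filter fun e => ¬ (W last ∩ e).Nonempty := by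
          rw [hFdef]
          apply Multiset.filter_congr
          intro e _
          simp [Finset.not_nonempty_iff_eq_empty]
        rw [h3]
        unfold edgesMeeting
        omega
      have claim1 : Multiset.card F ≤
          ∑ i ∈ I, Multiset.card (G.filter fun e => 2 ≤ (W i ∩ e).card) := by
        have step1 : Multiset.card F ≤
            (F.map fun e => (I.filter fun i => 2 ≤ (W i ∩ e).card).card).sum := by
          have hconst : Multiset.card F = (F.map fun _ => 1).sum := by
            simp [Multiset.map_const', Multiset.sum_replicate]
          rw [hconst]
          apply sum_map_le
          intro e he
          have hc := hcover e he
          rw [Nat.one_le_iff_ne_zero]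
          intro h0
          have hall : ∀ i ∈ I, ¬ 2 ≤ (W i ∩ e).card := by
            intro i hi
            have hemp := Finset.card_eq_zero.mp h0
            rw [Finset.filter_eq_empty_iff] at hemp
            exact hemp hi
          have hle : ∑ i ∈ I, (W i ∩ e).card ≤ ∑ _i ∈ I, 1 := by
            apply Finset.sum_le_sum
            intro i hi
            have := hall i hi
            omega
          rw [Finset.sum_const, smul_eq_mul, mul_one, hIcard] at hle
          omega
        calc Multiset.card F ≤ _ := step1
          _ = ∑ i ∈ I, Multiset.card (F.filter fun e => 2 ≤ (W i ∩ e).card) :=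
              (double_count F I _).symm
          _ ≤ ∑ i ∈ I, Multiset.card (G.filter fun e => 2 ≤ (W i ∩ e).card) := by
              apply Finset.sum_le_sum
              intro i _
              apply Multiset.card_le_card
              apply Multiset.filter_le_filter
              rw [hFdef]
              exact Multiset.filter_le _ G
      have hsingle : ∀ i ∈ I, (F.map fun e => (W i ∩ e).card).sum ≤
          Multiset.card (G.filter fun e => (W i ∩ e).card = 1) := by
        intro i hiI
        have hilt : (i : ℕ) < r - 1 := by
          rw [hIdef, Finset.mem_filter] at hiI; exact hiI.2
        have hine : i ≠ last := by
          intro h; rw [h, hlastval] at hilt; omega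
        have stepA : (F.map fun e => (W i ∩ e).card).sum
            = ∑ w ∈ W i, Multiset.card (F.filter fun e => w ∈ e) := by
          rw [double_count F (W i) (fun w e => w ∈ e)]
          apply congrArg
          apply Multiset.map_congr rfl
          intro e _
          have : (W i).filter (fun w => w ∈ e) = W i ∩ e := by
            ext x
            simp [Finset.mem_inter, Finset.mem_filter]
          rw [this]
        rw [stepA]
        have stepB : ∀ w ∈ W i, Multiset.card (F.filter fun e => w ∈ e) ≤
            Multiset.card (G.filter fun e => w ∈ e ∧ ((P i \ {w}) ∩ e) = ∅) := by
          intro w hw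
          have h1 : Multiset.card (F.filter fun e => w ∈ e) ≤
              Multiset.card (G.filter fun e => w ∈ e ∧ (P last ∩ e) = ∅) := by
            rw [hFdef, Multiset.filter_filter]
            apply Multiset.card_le_card
            apply Multiset.monotone_filter_right
            rintro e ⟨hwe, hle⟩
            refine ⟨hwe, ?_⟩
            apply Finset.subset_empty.mp
            rw [← hle]
            exact Finset.inter_subset_inter hPlastW (subset_refl e)
          exact le_trans h1 (key i hine w (hWsub i hilt hw))
        calc ∑ w ∈ W i, Multiset.card (F.filter fun e => w ∈ e)
            ≤ ∑ w ∈ W i, Multiset.card (G.filter fun e => w ∈ e ∧ ((P i \ {w}) ∩ e) = ∅) :=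
              Finset.sum_le_sum stepB
          _ = (G.map fun e =>
                ((W i).filter fun w => w ∈ e ∧ ((P i \ {w}) ∩ e) = ∅).card).sum :=
              double_count G (W i) _
          _ ≤ (G.map fun e => if (W i ∩ e).card = 1 then 1 else 0).sum := by
              apply sum_map_le
              intro e _
              rcases Finset.eq_empty_or_nonempty
                ((W i).filter fun w => w ∈ e ∧ ((P i \ {w}) ∩ e) = ∅) with h | h
              · simp [h]
              · obtain ⟨w, hwf⟩ := h
                rw [Finset.mem_filter] at hwf
                obtain ⟨hwW, hwe, hwd⟩ := hwf
                have hWie : W i ∩ e = {w} := by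
                  apply Finset.Subset.antisymm
                  · intro x hx
                    rw [Finset.mem_inter] at hx
                    rw [Finset.mem_singleton]
                    by_contra hne
                    have hmem : x ∈ (P i \ {w}) ∩ e := Finset.mem_inter.mpr
                      ⟨Finset.mem_sdiff.mpr ⟨hWsub i hilt hx.1, by simp [hne]⟩, hx.2⟩
                    rw [hwd] at hmem
                    exact absurd hmem (Finset.notMem_empty x)
                  · intro x hx
                    rw [Finset.mem_singleton] at hx
                    subst hx
                    exact Finset.mem_inter.mpr ⟨hwW, hwe⟩
                have hcard1 : (W i ∩ e).card = 1 := by rw [hWie]; simp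
                rw [if_pos hcard1]
                have hsub : ((W i).filter fun w' => w' ∈ e ∧ ((P i \ {w'}) ∩ e) = ∅)
                    ⊆ {w} := by
                  intro x hx
                  rw [Finset.mem_filter] at hx
                  obtain ⟨hxW, hxe, hxd⟩ := hx
                  have hmem : x ∈ W i ∩ e := Finset.mem_inter.mpr ⟨hxW, hxe⟩
                  rw [hWie] at hmem
                  exact hmem
                calc _ ≤ ({w} : Finset V).card := Finset.card_le_card hsub
                  _ = 1 := Finset.card_singleton w
          _ = Multiset.card (G.filter fun e => (W i ∩ e).card = 1) :=
              (card_filter_eq_sum G _).symm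
      have claim2 : r * Multiset.card F ≤
          ∑ i ∈ I, Multiset.card (G.filter fun e => (W i ∩ e).card = 1) := by
        calc r * Multiset.card F = (F.map fun _ => r).sum := by
              simp [Multiset.map_const', Multiset.sum_replicate, mul_comm]
          _ ≤ (F.map fun e => ∑ i ∈ I, (W i ∩ e).card).sum := sum_map_le _ _ _ hcover
          _ = ∑ i ∈ I, (F.map fun e => (W i ∩ e).card).sum := (sum_swap_lemma F I _).symm
          _ ≤ ∑ i ∈ I, Multiset.card (G.filter fun e => (W i ∩ e).card = 1) :=
              Finset.sum_le_sum hsingle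
      have hkey : (r + 1) * Multiset.card F ≤ ∑ i ∈ I, edgesMeeting G (W i) := by
        have hsum2 : ∑ i ∈ I, edgesMeeting G (W i) =
            (∑ i ∈ I, Multiset.card (G.filter fun e => (W i ∩ e).card = 1)) +
            (∑ i ∈ I, Multiset.card (G.filter fun e => 2 ≤ (W i ∩ e).card)) := by
          rw [← Finset.sum_add_distrib]
          exact Finset.sum_congr rfl fun i _ => hsplitW i
        have hmul : (r + 1) * Multiset.card F
            = r * Multiset.card F + Multiset.card F := by ring
        rw [hsum2, hmul]
        exact Nat.add_le_add claim2 claim1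
      -- conclude over the reals
      have hcastF : (Multiset.card F : ℝ) = (m : ℝ) - (edgesMeeting G (W last) : ℝ) := by
        have h : ((Multiset.card F + edgesMeeting G (W last) : ℕ) : ℝ) = (m : ℝ) := by
          exact_mod_cast congrArg (fun n : ℕ => (n : ℝ)) hFcard
        push_cast at h
        linarith
      have hrpos : (0 : ℝ) < (r : ℝ) + 1 := by positivity
      calc ((r : ℝ) + 1) * ((m : ℝ) - c * m)
          < ((r : ℝ) + 1) * ((m : ℝ) - (edgesMeeting G (W last) : ℝ)) := by
            apply mul_lt_mul_of_pos_left _ hrpos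
            linarith
        _ = ((r : ℝ) + 1) * (Multiset.card F : ℝ) := by rw [hcastF]
        _ = (((r + 1) * Multiset.card F : ℕ) : ℝ) := by push_cast; ring
        _ ≤ ((∑ i ∈ I, edgesMeeting G (W i) : ℕ) : ℝ) := by exact_mod_cast hkey
        _ = ∑ i ∈ I, (edgesMeeting G (W i) : ℝ) := by push_cast; rfl
end
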